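/- α₀ = 0 if and only if F = F_b (i.e., F(x) = F_b(x) for all x ∈ ℝ). -/

import Mathlib

open Filter Topology

/-- A cumulative distribution function: non-decreasing, right-continuous,
tending to 0 at -∞ and to 1 at +∞. -/
def IsCDF (G : ℝ → ℝ) : Prop :=
  Monotone G ∧ (∀ x : ℝ, ContinuousWithinAt G (Set.Ici x) x) ∧
    Tendsto G atBot (𝓝 0) ∧ Tendsto G atTop (𝓝 1)

/-- The identifiable mixing proportion α₀. -/
noncomputable def alpha0 (F Fb : ℝ → ℝ) : ℝ :=
  sInf {γ : ℝ | γ ∈ Set.Ioc (0 : ℝ) 1 ∧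
    IsCDF (fun x => (F x - (1 - γ) * Fb x) / γ)}

lemma cdf_nonneg {G : ℝ → ℝ} (hG : IsCDF G) (x : ℝ) : 0 ≤ G x := by
  obtain ⟨mono, _, h0, _⟩ := hG
  exact le_of_tendsto h0 ((eventually_le_atBot x).mono fun y hy => mono hy)

lemma cdf_le_one {G : ℝ → ℝ} (hG : IsCDF G) (x : ℝ) : G x ≤ 1 := by
  obtain ⟨mono, _, _, h1⟩ := hG
  exact ge_of_tendsto h1 ((eventually_ge_atTop x).mono fun y hy => mono hy)

/-- Lemma 2 (second part): α₀ = 0 if and only if F = F_b. -/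
theorem alpha0_eq_zero_iff
    (Fs Fb : ℝ → ℝ) (hFs : IsCDF Fs) (hFb : IsCDF Fb) (hne : Fs ≠ Fb)
    (α : ℝ) (hα : α ∈ Set.Ioc (0 : ℝ) 1)
    (F : ℝ → ℝ) (hF : F = fun x => α * Fs x + (1 - α) * Fb x) :
    alpha0 F Fb = 0 ↔ ∀ x : ℝ, F x = Fb x := by
  obtain ⟨hα0, hα1⟩ := hα
  -- a point where Fs and Fb differ
  obtain ⟨x₀, hx₀⟩ : ∃ x, Fs x ≠ Fb x := by
    by_contra h
    push_neg at h
    exact hne (funext h)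
  have hFx₀ : F x₀ ≠ Fb x₀ := by
    simp only [hF]
    intro h
    apply hx₀
    have : α * Fs x₀ = α * Fb x₀ := by linarith
    exact mul_left_cancel₀ (ne_of_gt hα0) this
  set ε : ℝ := |F x₀ - Fb x₀| with hε
  have hεpos : 0 < ε := abs_pos.mpr (sub_ne_zero.mpr hFx₀)
  -- the set is nonempty: α belongs to it
  have hmem : α ∈ {γ : ℝ | γ ∈ Set.Ioc (0 : ℝ) 1 ∧
      IsCDF (fun x => (F x - (1 - γ) * Fb x) / γ)} := by
    refine ⟨⟨hα0, hα1⟩, ?_⟩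
    have : (fun x => (F x - (1 - α) * Fb x) / α) = Fs := by
      funext x
      simp only [hF]
      field_simp
      ring
    rw [this]
    exact hFs
  -- every element of the set is ≥ ε
  have hbound : ∀ γ ∈ {γ : ℝ | γ ∈ Set.Ioc (0 : ℝ) 1 ∧
      IsCDF (fun x => (F x - (1 - γ) * Fb x) / γ)}, ε ≤ γ := by
    rintro γ ⟨⟨hγ0, hγ1⟩, hG⟩
    have h1 := cdf_nonneg hG x₀
    have h2 := cdf_le_one hG x₀
    have h3 := cdf_nonneg hFb x₀
    have h4 := cdf_le_one hFb x₀
    rw [div_nonneg_iff] at h1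
    rw [div_le_one hγ0] at h2
    rcases h1 with ⟨h1, _⟩ | ⟨_, h1'⟩
    · rw [hε, abs_le]
      constructor <;> nlinarith
    · nlinarith
  have hge : ε ≤ alpha0 F Fb := le_csInf ⟨α, hmem⟩ hbound
  constructor
  · intro h0
    exact absurd (h0 ▸ hge) (not_le.mpr hεpos)
  · intro h
    exact absurd (h x₀) hFx₀
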